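/- Let V be a matricial operator system inside Matrix (Fin d) (Fin d) ℂ, let B be a finite-dimensional C*-algebra, let i : V → B be a unital completely positive map, and let φ : V →ₗ[ℂ] V be a unital completely positive map. Then the set { ψ : B →ₗ[ℂ] B | ψ is unital completely positive and ψ ∘ i = i ∘ φ } is a compact subset of the space of continuous linear maps B → B in the operator-norm topology. -/

import Mathlib

open scoped NNReal ComplexOrder

/-- The `(n*d) × (n*d)` block complex matrix associated to an `n × n` matrix whose entries
are `d × d` complex matrices. -/
def blockMat {n d : ℕ} (M : Fin n → Fin n → Matrix (Fin d) (Fin d) ℂ) :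
    Matrix (Fin n × Fin d) (Fin n × Fin d) ℂ :=
  Matrix.of fun p q => M p.1 q.1 p.2 q.2

/-- An `n × n` matrix with entries in a subspace `V` of `d × d` complex matrices is positive if
the associated block complex matrix is positive semidefinite. -/
def PosOverV {d : ℕ} {V : Submodule ℂ (Matrix (Fin d) (Fin d) ℂ)} {n : ℕ}
    (M : Fin n → Fin n → V) : Prop :=
  (blockMat fun k l => (M k l : Matrix (Fin d) (Fin d) ℂ)).PosSemidef

/-- Positivity of an element of the `n × n` matrices over a C*-algebra `B`: it is positive
iff it factors as `star y * y`. -/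
def PosOverB {B : Type*} [Ring B] [StarRing B] {n : ℕ}
    (x : Matrix (Fin n) (Fin n) B) : Prop :=
  ∃ y : Matrix (Fin n) (Fin n) B, x = star y * y

section Defs

variable {d : ℕ} (V : Submodule ℂ (Matrix (Fin d) (Fin d) ℂ))
variable (B : Type*) [NormedRing B] [StarRing B] [CStarRing B] [NormedAlgebra ℂ B]
  [CompleteSpace B] [StarModule ℂ B]

/-- A linear map on a matricial operator system `V` is unital completely positive. -/
def IsUCPVV (h1 : (1 : Matrix (Fin d) (Fin d) ℂ) ∈ V) (φ : V →ₗ[ℂ] V) : Prop :=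
  φ ⟨1, h1⟩ = ⟨1, h1⟩ ∧
  ∀ (n : ℕ) (M : Fin n → Fin n → V), PosOverV M → PosOverV fun k l => φ (M k l)

/-- A linear map from a matricial operator system `V` into a C*-algebra `B` is unital
completely positive. -/
def IsUCPVB (h1 : (1 : Matrix (Fin d) (Fin d) ℂ) ∈ V) (θ : V →ₗ[ℂ] B) : Prop :=
  θ ⟨1, h1⟩ = 1 ∧
  ∀ (n : ℕ) (M : Fin n → Fin n → V), PosOverV M →
    PosOverB (Matrix.of fun k l => θ (M k l))

/-- A linear map on a C*-algebra `B` is unital completely positive. -/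
def IsUCPBB (ψ : B →ₗ[ℂ] B) : Prop :=
  ψ 1 = 1 ∧
  ∀ (n : ℕ) (x : Matrix (Fin n) (Fin n) B), PosOverB x → PosOverB (x.map ⇑ψ)

/-- `i : V → B` is a unital complete order embedding: it is unital and for every `n`, an
`n × n` matrix over `V` is positive iff its entrywise image under `i` is positive. -/
def IsUCOEmbedding (h1 : (1 : Matrix (Fin d) (Fin d) ℂ) ∈ V) (i : V →ₗ[ℂ] B) : Prop :=
  (i ⟨1, h1⟩ = 1) ∧
  ∀ (n : ℕ) (M : Fin n → Fin n → V),
    PosOverV M ↔ PosOverB (Matrix.of fun k l => i (M k l))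

/-- `i : V → B` has the extension property: every UCP map `θ : V → B` extends to a UCP map
on all of `B` through `i`. -/
def HasExtensionProperty (h1 : (1 : Matrix (Fin d) (Fin d) ℂ) ∈ V) (i : V →ₗ[ℂ] B) : Prop :=
  ∀ θ : V →ₗ[ℂ] B, IsUCPVB V B h1 θ →
    ∃ Θ : B →ₗ[ℂ] B, IsUCPBB B Θ ∧ ∀ v : V, Θ (i v) = θ v

/-- `i : V → B` is rigid: the only UCP map on `B` fixing the image of `i` is the identity. -/
def IsRigid (i : V →ₗ[ℂ] B) : Prop :=
  ∀ ψ : B →ₗ[ℂ] B, IsUCPBB B ψ → (∀ v : V, ψ (i v) = i v) → ψ = LinearMap.id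

end Defs


section Aux

variable {A : Type*} [CStarAlgebra A] [PartialOrder A] [StarOrderedRing A]

lemma aux_nonneg_exists {a : A} (ha : 0 ≤ a) : ∃ z : A, a = star z * z :=
  ⟨CFC.sqrt a, by rw [(IsSelfAdjoint.of_nonneg (CFC.sqrt_nonneg a)).star_eq,
    CFC.sqrt_mul_sqrt_self a ha]⟩

lemma aux_norm_mono {p q : A} (hp : 0 ≤ p) (hpq : p ≤ q) : ‖p‖ ≤ ‖q‖ :=
  (CStarAlgebra.norm_le_iff_le_algebraMap p (norm_nonneg q) hp).mpr
    (hpq.trans (IsSelfAdjoint.le_algebraMap_norm_self (.of_nonneg (hp.trans hpq))))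

lemma aux_posOverB_limit [FiniteDimensional ℂ A] {n : ℕ}
    (m : ℕ → Matrix (Fin n) (Fin n) A) (M : Matrix (Fin n) (Fin n) A)
    (hconv : ∀ a b, Filter.Tendsto (fun j => m j a b) Filter.atTop (nhds (M a b)))
    (hpos : ∀ j, PosOverB (m j)) : PosOverB M := by
  rcases Nat.eq_zero_or_pos n with hn | hn
  · subst hn; exact ⟨0, by ext a b; exact a.elim0⟩
  haveI : Nonempty (Fin n) := ⟨⟨0, hn⟩⟩
  choose y hy using hpos
  have hme : ∀ j a b, m j a b = ∑ k, star (y j k a) * (y j k b) := by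
    intro j a b
    rw [hy j]; simp [Matrix.mul_apply, Matrix.star_apply]
  have hentry : ∀ j a b, ‖y j a b‖ ^ 2 ≤ ‖m j b b‖ := by
    intro j a b
    have hle : star (y j a b) * (y j a b) ≤ m j b b := by
      rw [hme j b b]
      exact Finset.single_le_sum (f := fun k => star (y j k b) * y j k b)
        (fun k _ => star_mul_self_nonneg _) (Finset.mem_univ a)
    calc ‖y j a b‖ ^ 2 = ‖star (y j a b) * y j a b‖ := by
          rw [CStarRing.norm_star_mul_self, sq]
      _ ≤ ‖m j b b‖ := aux_norm_mono (star_mul_self_nonneg _) hle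
  have hbdd : ∀ b : Fin n, ∃ C, ∀ j, ‖m j b b‖ ≤ C := by
    intro b
    obtain ⟨C, hC⟩ := ((hconv b b).norm).bddAbove_range
    exact ⟨C, fun j => hC (Set.mem_range_self j)⟩
  choose C hC using hbdd
  set R : ℝ := Finset.univ.sup' Finset.univ_nonempty C with hR
  have hCR : ∀ b, C b ≤ R := fun b => Finset.le_sup' C (Finset.mem_univ b)
  set r := Real.sqrt R with hr
  have hr0 : 0 ≤ r := Real.sqrt_nonneg _
  obtain ⟨b0⟩ := (inferInstance : Nonempty (Fin n))
  have hR0 : (0 : ℝ) ≤ R := (norm_nonneg (m 0 b0 b0)).trans ((hC b0 0).trans (hCR b0))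
  have hyr : ∀ j a b, ‖y j a b‖ ≤ r := by
    intro j a b
    have h2 : ‖y j a b‖ ^ 2 ≤ R := (hentry j a b).trans ((hC b j).trans (hCR b))
    exact (Real.le_sqrt (norm_nonneg _) hR0).mpr h2
  have hmemball : ∀ j, (fun a b => y j a b : Fin n → Fin n → A) ∈ Metric.closedBall 0 r := by
    intro j
    rw [Metric.mem_closedBall, dist_zero_right]
    exact (pi_norm_le_iff_of_nonneg hr0).mpr fun a =>
      (pi_norm_le_iff_of_nonneg hr0).mpr fun b => hyr j a b
  obtain ⟨Y, -, k, hk, hconv'⟩ :=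
    (isCompact_closedBall (0 : Fin n → Fin n → A) r).tendsto_subseq hmemball
  refine ⟨Matrix.of fun a b => Y a b, ?_⟩
  ext a b
  have hYab : ∀ c e, Filter.Tendsto (fun j => y (k j) c e) Filter.atTop (nhds (Y c e)) := by
    intro c e
    exact tendsto_pi_nhds.mp (tendsto_pi_nhds.mp hconv' c) e
  have hL1 : Filter.Tendsto (fun j => m (k j) a b) Filter.atTop (nhds (M a b)) :=
    (hconv a b).comp hk.tendsto_atTop
  have hL2 : Filter.Tendsto (fun j => m (k j) a b) Filter.atTop
      (nhds (∑ c, star (Y c a) * Y c b)) := by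
    simp only [hme]
    exact tendsto_finset_sum _ fun c _ => ((hYab c a).star.mul (hYab c b))
  rw [tendsto_nhds_unique hL1 hL2]
  simp [Matrix.mul_apply, Matrix.star_apply]

lemma aux_ucp_norm_le (ψ : A →ₗ[ℂ] A) (hψ : IsUCPBB A ψ) (x : A) : ‖ψ x‖ ≤ ‖x‖ := by
  obtain ⟨hu, hpos⟩ := hψ
  have hmono : ∀ a : A, 0 ≤ a → 0 ≤ ψ a := by
    intro a ha
    obtain ⟨z, hz⟩ := aux_nonneg_exists ha
    have hP : PosOverB (Matrix.of fun _ _ : Fin 1 => a) := by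
      refine ⟨Matrix.of fun _ _ : Fin 1 => z, ?_⟩
      ext i j
      simp [Matrix.mul_apply, Matrix.star_apply, hz]
    obtain ⟨w, hw⟩ := hpos 1 _ hP
    have h0 : ψ a = ∑ k : Fin 1, star (w k 0) * w k 0 := by
      have := congrFun (congrFun hw 0) 0
      simpa [Matrix.mul_apply, Matrix.star_apply] using this
    rw [h0]
    exact Finset.sum_nonneg fun k _ => star_mul_self_nonneg _
  have halg : ∀ r : ℝ, ψ (algebraMap ℝ A r) = algebraMap ℝ A r := by
    intro r
    have h1 : algebraMap ℝ A r = (r : ℂ) • (1 : A) := by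
      rw [IsScalarTower.algebraMap_apply ℝ ℂ A, Algebra.algebraMap_eq_smul_one]
      norm_num
    rw [h1, map_smul, hu]
  have hM : PosOverB !![(1 : A), x; star x, star x * x] := by
    refine ⟨!![(1 : A), x; 0, 0], ?_⟩
    ext i j
    fin_cases i <;> fin_cases j <;>
      simp [Matrix.mul_apply, Matrix.star_apply, Fin.sum_univ_two]
  obtain ⟨w, hw⟩ := hpos 2 _ hM
  have hN : ∀ i j : Fin 2, ψ (!![(1 : A), x; star x, star x * x] i j)
      = star (w 0 i) * w 0 j + star (w 1 i) * w 1 j := by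
    intro i j
    have := congrFun (congrFun hw i) j
    simpa [Matrix.mul_apply, Matrix.star_apply, Fin.sum_univ_two] using this
  have h00 : star (w 0 0) * w 0 0 + star (w 1 0) * w 1 0 = 1 := by
    have h := hN 0 0
    rw [show (!![(1 : A), x; star x, star x * x]) 0 0 = 1 from rfl, hu] at h
    exact h.symm
  have h01 : star (w 0 0) * w 0 1 + star (w 1 0) * w 1 1 = ψ x :=
    (hN 0 1).symm
  have h10 : star (w 0 1) * w 0 0 + star (w 1 1) * w 1 0 = ψ (star x) :=
    (hN 1 0).symm
  have h11 : star (w 0 1) * w 0 1 + star (w 1 1) * w 1 1 = ψ (star x * x) :=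
    (hN 1 1).symm
  have hsa : ψ (star x) = star (ψ x) := by
    rw [← h10, ← h01]
    simp only [star_add, star_mul, star_star]
  rw [hsa] at h10
  have hkey : ψ (star x * x) - star (ψ x) * ψ x
      = star (w 0 0 * ψ x - w 0 1) * (w 0 0 * ψ x - w 0 1)
        + star (w 1 0 * ψ x - w 1 1) * (w 1 0 * ψ x - w 1 1) := by
    have expand : star (w 0 0 * ψ x - w 0 1) * (w 0 0 * ψ x - w 0 1)
        + star (w 1 0 * ψ x - w 1 1) * (w 1 0 * ψ x - w 1 1)
        = star (ψ x) * ((star (w 0 0) * w 0 0 + star (w 1 0) * w 1 0) * ψ x)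
          - star (ψ x) * (star (w 0 0) * w 0 1 + star (w 1 0) * w 1 1)
          - (star (w 0 1) * w 0 0 + star (w 1 1) * w 1 0) * ψ x
          + (star (w 0 1) * w 0 1 + star (w 1 1) * w 1 1) := by
      simp only [star_sub, star_mul]
      noncomm_ring
    rw [expand, h00, h01, h10, h11]
    noncomm_ring
  have hpos2 : star (ψ x) * ψ x ≤ ψ (star x * x) := by
    have := hkey ▸ add_nonneg (star_mul_self_nonneg (w 0 0 * ψ x - w 0 1))
      (star_mul_self_nonneg (w 1 0 * ψ x - w 1 1))
    exact sub_nonneg.mp this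
  have hc : ψ (star x * x) ≤ algebraMap ℝ A (‖x‖ ^ 2) := by
    have h1' : (0 : A) ≤ algebraMap ℝ A (‖x‖ ^ 2) - star x * x :=
      sub_nonneg.mpr CStarAlgebra.star_mul_le_algebraMap_norm_sq
    have h2' := hmono _ h1'
    rw [map_sub, halg] at h2'
    exact sub_nonneg.mp h2'
  have hnorm : ‖star (ψ x) * ψ x‖ ≤ ‖x‖ ^ 2 :=
    (CStarAlgebra.norm_le_iff_le_algebraMap _ (sq_nonneg ‖x‖)
      (star_mul_self_nonneg (ψ x))).mpr (hpos2.trans hc)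
  rw [CStarRing.norm_star_mul_self] at hnorm
  nlinarith [norm_nonneg (ψ x), norm_nonneg x]

end Aux

/-- **Compactness of the set of UCP extensions**: for a matricial operator system `V`, a
finite-dimensional C*-algebra `B`, a UCP map `i : V → B` and a UCP map `φ` on `V`, the set of
UCP maps `ψ` on `B` satisfying `ψ ∘ i = i ∘ φ` is compact in the operator-norm topology. -/
theorem isCompact_ucp_extensions
    {d : ℕ} (V : Submodule ℂ (Matrix (Fin d) (Fin d) ℂ))
    (h1 : (1 : Matrix (Fin d) (Fin d) ℂ) ∈ V)
    (hstar : ∀ v ∈ V, v.conjTranspose ∈ V)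
    (B : Type*) [NormedRing B] [StarRing B] [CStarRing B] [NormedAlgebra ℂ B]
    [CompleteSpace B] [StarModule ℂ B] [FiniteDimensional ℂ B]
    (i : V →ₗ[ℂ] B)
    (hiucp : IsUCPVB V B h1 i)
    (φ : V →ₗ[ℂ] V)
    (hφucp : IsUCPVV V h1 φ) :
    IsCompact {ψ : B →L[ℂ] B |
      IsUCPBB B (ψ : B →ₗ[ℂ] B) ∧ ∀ v : V, ψ (i v) = i (φ v)} := by
  classical
  letI : CStarAlgebra B := {}
  letI : PartialOrder B := CStarAlgebra.spectralOrder B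
  letI : StarOrderedRing B := CStarAlgebra.spectralOrderedRing B
  refine IsCompact.of_isClosed_subset (isCompact_closedBall (0 : B →L[ℂ] B) 1) ?_ ?_
  · refine IsSeqClosed.isClosed ?_
    intro ψs ψ hmem htend
    have hev : ∀ x : B, Filter.Tendsto (fun j => ψs j x) Filter.atTop (nhds (ψ x)) :=
      fun x => ((ContinuousLinearMap.apply ℂ B x).continuous.tendsto ψ).comp htend
    refine ⟨⟨?_, ?_⟩, ?_⟩
    · have hconst : (fun j => (ψs j) (1 : B)) = fun _ => (1 : B) :=
        funext fun j => (hmem j).1.1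
      refine tendsto_nhds_unique (hev 1) ?_
      rw [hconst]; exact tendsto_const_nhds
    · intro n xM hx
      refine aux_posOverB_limit (fun j => xM.map ⇑(ψs j)) (xM.map ⇑ψ) ?_ ?_
      · intro a b
        simpa [Matrix.map_apply] using hev (xM a b)
      · intro j
        exact (hmem j).1.2 n xM hx
    · intro v
      have hconst : (fun j => (ψs j) (i v)) = fun _ => i (φ v) :=
        funext fun j => (hmem j).2 v
      refine tendsto_nhds_unique (hev (i v)) ?_
      rw [hconst]; exact tendsto_const_nhds
  · intro ψ hψ
    rw [Metric.mem_closedBall, dist_zero_right]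
    refine ContinuousLinearMap.opNorm_le_bound ψ zero_le_one fun x => ?_
    rw [one_mul]
    exact aux_ucp_norm_le _ hψ.1 x
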